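/- Let i ≥ 1 and let G_i be as above. Then a set X containing s but not t is a connected convex set of G_i if and only if X = {s} ∪ ⋃_{j ∈ J} S_j where for each j, S_j ∈ {∅, {a_j}, {a_j, b_j}}. Hence G_i has exactly 3^i connected convex sets containing s but not t. -/

import Mathlib

/-!
Digraphs are given by an arc relation `A : V → V → Prop` on a vertex type `V`.
A directed path from `a` to `b` is encoded as `a :: (l ++ [b])` where the list
satisfies `List.Chain A` (consecutive arcs) and `List.Nodup` (distinct vertices);
`l` is the list of internal vertices.
-/

variable {V : Type*}

/-- A non-empty vertex set `X` is convex if no directed path between two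
vertices of `X` contains a vertex not in `X`. -/
def ConvexIn (A : V → V → Prop) (X : Set V) : Prop :=
  X.Nonempty ∧ ∀ a b : V, ∀ l : List V, a ∈ X → b ∈ X →
    List.Chain A a (l ++ [b]) → (a :: (l ++ [b])).Nodup → ∀ w ∈ l, w ∈ X

/-- A vertex set is connected if the underlying undirected graph induced on it
is connected. -/
def ConnectedIn (A : V → V → Prop) (X : Set V) : Prop :=
  ((SimpleGraph.fromRel A).induce X).Connected

/-- A digraph is acyclic if it has no directed cycle, equivalently no
nontrivial directed closed walk. -/
def AcyclicDigraph (A : V → V → Prop) : Prop :=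
  ∀ v, ¬ Relation.TransGen A v v

/-- A digraph is connected if its underlying undirected graph is connected. -/
def DigraphConnected (A : V → V → Prop) : Prop :=
  (SimpleGraph.fromRel A).Connected

/-- A source is a vertex with in-degree zero. -/
def IsSourceIn (A : V → V → Prop) (v : V) : Prop := ∀ u, ¬ A u v

/-- A sink is a vertex with out-degree zero. -/
def IsSinkIn (A : V → V → Prop) (v : V) : Prop := ∀ u, ¬ A v u

/-- A cut-vertex of a connected digraph: deleting it disconnects the
underlying undirected graph. -/
def IsCutVertexIn (A : V → V → Prop) (v : V) : Prop :=
  ¬ ((SimpleGraph.fromRel A).induce {u | u ≠ v}).Connected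

/-- Vertices of the digraph `G_i`: a source `s`, a sink `t`, and internal
vertices `a j`, `b j` on the `j`-th path, for `j : Fin i`. -/
inductive GV (i : ℕ) : Type
  | s : GV i
  | t : GV i
  | a : Fin i → GV i
  | b : Fin i → GV i
deriving DecidableEq

/-- Arcs of `G_i`: `s → a j`, `a j → b j`, `b j → t` for each `j`. -/
def GAdj {i : ℕ} : GV i → GV i → Prop
  | GV.s, GV.a _ => True
  | GV.a j, GV.b k => j = k
  | GV.b _, GV.t => True
  | _, _ => False

section Aux
variable {i : ℕ}


lemma no_into_s (x : GV i) : ¬ GAdj x GV.s := by cases x <;> exact fun h => h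

lemma no_out_t (y : GV i) : ¬ GAdj GV.t y := by cases y <;> exact fun h => h

lemma into_a {j : Fin i} {x : GV i} (h : GAdj x (GV.a j)) : x = GV.s := by
  cases x with
  | s => rfl
  | t => exact h.elim
  | a k => exact h.elim
  | b k => exact h.elim

lemma out_a {j : Fin i} {y : GV i} (h : GAdj (GV.a j) y) : y = GV.b j := by
  cases y with
  | b k => cases h; rfl
  | s => exact h.elim
  | t => exact h.elim
  | a k => exact h.elim

lemma into_b {j : Fin i} {x : GV i} (h : GAdj x (GV.b j)) : x = GV.a j := by
  cases x with
  | a k => cases h; rfl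
  | s => exact h.elim
  | t => exact h.elim
  | b k => exact h.elim

lemma out_b {j : Fin i} {y : GV i} (h : GAdj (GV.b j) y) : y = GV.t := by
  cases y with
  | t => rfl
  | s => exact h.elim
  | a k => exact h.elim
  | b k => exact h.elim

/-- If `X` is built from `{s}` and pieces `S j`, then `b j ∈ X` forces `a j ∈ X`. -/
lemma b_mem_imp_a_mem {S : Fin i → Set (GV i)}
    (hS : ∀ j : Fin i, S j = ∅ ∨ S j = {GV.a j} ∨ S j = {GV.a j, GV.b j})
    {j : Fin i} (hb : GV.b j ∈ ({GV.s} ∪ ⋃ k : Fin i, S k : Set (GV i))) :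
    GV.a j ∈ ({GV.s} ∪ ⋃ k : Fin i, S k : Set (GV i)) := by
  rcases hb with hb | hb
  · exact absurd hb (by simp)
  · simp only [Set.mem_iUnion] at hb
    obtain ⟨k, hk⟩ := hb
    rcases hS k with h | h | h <;> rw [h] at hk
    · exact hk.elim
    · simp at hk
    · rcases hk with hk | hk
      · simp at hk
      · have : j = k := by injection hk
        subst this
        right
        exact Set.mem_iUnion.mpr ⟨j, by rw [h]; left; rfl⟩

lemma t_not_mem {S : Fin i → Set (GV i)}
    (hS : ∀ j : Fin i, S j = ∅ ∨ S j = {GV.a j} ∨ S j = {GV.a j, GV.b j}) :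
    GV.t ∉ ({GV.s} ∪ ⋃ k : Fin i, S k : Set (GV i)) := by
  intro h
  rcases h with h | h
  · simp at h
  · simp only [Set.mem_iUnion] at h
    obtain ⟨k, hk⟩ := h
    rcases hS k with h | h | h <;> rw [h] at hk <;> simp at hk

/-- Convexity for any `X` with `t ∉ X` such that `b j ∈ X → a j ∈ X`. -/
lemma convex_aux {X : Set (GV i)} (hs : GV.s ∈ X) (ht : GV.t ∉ X)
    (hba : ∀ j : Fin i, GV.b j ∈ X → GV.a j ∈ X) :
    ∀ a b : GV i, ∀ l : List (GV i), a ∈ X → b ∈ X →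
      List.Chain GAdj a (l ++ [b]) → (a :: (l ++ [b])).Nodup → ∀ w ∈ l, w ∈ X := by
  intro a b l ha hb hchain hnodup w hw
  match l with
  | [] => simp at hw
  | [w1] =>
    rw [List.mem_singleton] at hw
    subst hw
    simp only [List.Chain, List.cons_append, List.nil_append, List.isChain_cons_cons, List.isChain_singleton,
      and_true] at hchain
    obtain ⟨h1, h2⟩ := hchain
    match w with
    | GV.s => exact absurd h1 (no_into_s a)
    | GV.t => exact absurd h2 (no_out_t b)
    | GV.a j =>
      have : b = GV.b j := out_a h2
      subst this
      exact hba j hb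
    | GV.b j =>
      have : b = GV.t := out_b h2
      subst this
      exact absurd hb ht
  | w1 :: w2 :: l3 =>
    exfalso
    simp only [List.Chain, List.cons_append, List.isChain_cons_cons] at hchain
    obtain ⟨h1, h2, hc3⟩ := hchain
    match w2 with
    | GV.s => exact no_into_s w1 h2
    | GV.t =>
      match l3 with
      | [] =>
        simp only [List.nil_append, List.isChain_cons_cons] at hc3
        exact no_out_t b hc3.1
      | h3 :: r =>
        simp only [List.cons_append, List.isChain_cons_cons] at hc3
        exact no_out_t h3 hc3.1
    | GV.a k =>
      have : w1 = GV.s := into_a h2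
      subst this
      exact no_into_s a h1
    | GV.b k =>
      match l3 with
      | [] =>
        simp only [List.nil_append, List.isChain_cons_cons] at hc3
        have : b = GV.t := out_b hc3.1
        subst this
        exact ht hb
      | h3 :: r =>
        simp only [List.cons_append, List.isChain_cons_cons] at hc3
        have : h3 = GV.t := out_b hc3.1
        subst this
        match r with
        | [] =>
          simp only [List.nil_append, List.isChain_cons_cons] at hc3
          exact no_out_t b hc3.2.1
        | h4 :: r2 =>
          simp only [List.cons_append, List.isChain_cons_cons] at hc3
          exact no_out_t h4 hc3.2.1

lemma induce_adj' {X : Set (GV i)} {u v : GV i} (hu : u ∈ X) (hv : v ∈ X)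
    (hne : u ≠ v) (h : GAdj u v ∨ GAdj v u) :
    ((SimpleGraph.fromRel GAdj).induce X).Adj ⟨u, hu⟩ ⟨v, hv⟩ := by
  show (SimpleGraph.fromRel GAdj).Adj u v
  rw [SimpleGraph.fromRel_adj]
  exact ⟨hne, h⟩

lemma connected_aux {X : Set (GV i)} (hs : GV.s ∈ X) (ht : GV.t ∉ X)
    (hba : ∀ j : Fin i, GV.b j ∈ X → GV.a j ∈ X) :
    ((SimpleGraph.fromRel GAdj).induce X).Connected := by
  rw [SimpleGraph.connected_iff]
  refine ⟨?_, ⟨⟨GV.s, hs⟩⟩⟩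
  have H : ∀ v : X, ((SimpleGraph.fromRel GAdj).induce X).Reachable v ⟨GV.s, hs⟩ := by
    rintro ⟨x, hx⟩
    cases x with
    | s => exact SimpleGraph.Reachable.refl _
    | t => exact absurd hx ht
    | a j =>
      exact (induce_adj' hx hs (by simp) (Or.inr trivial)).reachable
    | b j =>
      have ha : GV.a j ∈ X := hba j hx
      exact ((induce_adj' hx ha (by simp) (Or.inr rfl)).reachable).trans
        ((induce_adj' ha hs (by simp) (Or.inr trivial)).reachable)
  exact fun u v => (H u).trans (H v).symm

lemma conn_b_imp_a {X : Set (GV i)}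
    (h : ((SimpleGraph.fromRel GAdj).induce X).Connected)
    (hs : GV.s ∈ X) (ht : GV.t ∉ X) {j : Fin i} (hb : GV.b j ∈ X) : GV.a j ∈ X := by
  obtain ⟨w⟩ := h.preconnected ⟨GV.b j, hb⟩ ⟨GV.s, hs⟩
  cases w with
  | @cons _ v _ hadj p =>
    have h2 : (SimpleGraph.fromRel GAdj).Adj (GV.b j) v.val := hadj
    rw [SimpleGraph.fromRel_adj] at h2
    rcases h2.2 with h' | h'
    · have hv := out_b h'
      exact absurd (hv ▸ v.2) ht
    · have hv := into_b h'
      exact hv ▸ v.2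

def pick (j : Fin i) (m : Fin 3) : Set (GV i) :=
  if m.val = 0 then ∅ else if m.val = 1 then {GV.a j} else {GV.a j, GV.b j}

lemma pick_cases (j : Fin i) (m : Fin 3) :
    pick j m = ∅ ∨ pick j m = {GV.a j} ∨ pick j m = {GV.a j, GV.b j} := by
  unfold pick; split_ifs <;> tauto

lemma mem_a_pick {j k : Fin i} {m : Fin 3} : GV.a j ∈ pick k m ↔ j = k ∧ m.val ≠ 0 := by
  unfold pick
  split_ifs with h1 h2
  · simp [h1]
  · simp [h2]
  · have h3 : m.val = 2 := by omega
    simp [h3]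

lemma mem_b_pick {j k : Fin i} {m : Fin 3} : GV.b j ∈ pick k m ↔ j = k ∧ m.val = 2 := by
  unfold pick
  split_ifs with h1 h2
  · simp [h1]
  · simp [h2]
  · have h3 : m.val = 2 := by omega
    simp [h3]

def Fc (c : Fin i → Fin 3) : Set (GV i) := {GV.s} ∪ ⋃ j, pick j (c j)

lemma mem_a_Fc {c : Fin i → Fin 3} {j : Fin i} : GV.a j ∈ Fc c ↔ (c j).val ≠ 0 := by
  simp [Fc, mem_a_pick]

lemma mem_b_Fc {c : Fin i → Fin 3} {j : Fin i} : GV.b j ∈ Fc c ↔ (c j).val = 2 := by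
  simp [Fc, mem_b_pick]

lemma Fc_inj : Function.Injective (Fc (i := i)) := by
  intro c c' h
  funext j
  have ha : (c j).val ≠ 0 ↔ (c' j).val ≠ 0 := by rw [← mem_a_Fc, ← mem_a_Fc, h]
  have hb : (c j).val = 2 ↔ (c' j).val = 2 := by rw [← mem_b_Fc, ← mem_b_Fc, h]
  have h1 := (c j).isLt
  have h2 := (c' j).isLt
  apply Fin.ext
  omega


end Aux

/-- The connected convex sets of `G_i` containing `s` but not `t` are exactly
the sets `{s} ∪ ⋃_j S_j` with each `S_j ∈ {∅, {a j}, {a j, b j}}`; there are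
exactly `3^i` of them. -/
theorem stmt_14 (i : ℕ) (hi : 1 ≤ i) :
    (∀ X : Set (GV i),
      (ConnectedIn GAdj X ∧ ConvexIn GAdj X ∧ GV.s ∈ X ∧ GV.t ∉ X) ↔
      (∃ S : Fin i → Set (GV i),
        (∀ j : Fin i, S j = ∅ ∨ S j = {GV.a j} ∨ S j = {GV.a j, GV.b j}) ∧
        X = {GV.s} ∪ ⋃ j : Fin i, S j)) ∧
    {X : Set (GV i) | ConnectedIn GAdj X ∧ ConvexIn GAdj X ∧
        GV.s ∈ X ∧ GV.t ∉ X}.ncard = 3 ^ i := by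
  have main : ∀ X : Set (GV i),
      (ConnectedIn GAdj X ∧ ConvexIn GAdj X ∧ GV.s ∈ X ∧ GV.t ∉ X) ↔
      (∃ S : Fin i → Set (GV i),
        (∀ j : Fin i, S j = ∅ ∨ S j = {GV.a j} ∨ S j = {GV.a j, GV.b j}) ∧
        X = {GV.s} ∪ ⋃ j : Fin i, S j) := by
    intro X
    constructor
    · rintro ⟨hconn, hconv, hsX, htX⟩
      refine ⟨fun j => X ∩ {GV.a j, GV.b j}, ?_, ?_⟩
      · intro j
        by_cases hb : GV.b j ∈ X
        · have ha := conn_b_imp_a hconn hsX htX hb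
          right; right
          ext x
          simp only [Set.mem_inter_iff, Set.mem_insert_iff, Set.mem_singleton_iff]
          constructor
          · exact fun h => h.2
          · rintro (rfl | rfl)
            exacts [⟨ha, Or.inl rfl⟩, ⟨hb, Or.inr rfl⟩]
        · by_cases ha : GV.a j ∈ X
          · right; left
            ext x
            simp only [Set.mem_inter_iff, Set.mem_insert_iff, Set.mem_singleton_iff]
            constructor
            · rintro ⟨hx, rfl | rfl⟩
              · rfl
              · exact absurd hx hb
            · rintro rfl
              exact ⟨ha, Or.inl rfl⟩
          · left
            ext x
            simp only [Set.mem_inter_iff, Set.mem_insert_iff, Set.mem_singleton_iff,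
              Set.mem_empty_iff_false, iff_false, not_and]
            rintro hx (rfl | rfl)
            exacts [ha hx, hb hx]
      · ext x
        simp only [Set.mem_union, Set.mem_iUnion, Set.mem_inter_iff, Set.mem_singleton_iff,
          Set.mem_insert_iff]
        constructor
        · intro hx
          cases x with
          | s => exact Or.inl rfl
          | t => exact absurd hx htX
          | a j => exact Or.inr ⟨j, hx, Or.inl rfl⟩
          | b j => exact Or.inr ⟨j, hx, Or.inr rfl⟩
        · rintro (rfl | ⟨j, hx, _⟩)
          exacts [hsX, hx]
    · rintro ⟨S, hS, rfl⟩
      have htX := t_not_mem hS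
      have hsX : GV.s ∈ ({GV.s} ∪ ⋃ k : Fin i, S k : Set (GV i)) := Or.inl rfl
      have hba : ∀ j : Fin i, GV.b j ∈ ({GV.s} ∪ ⋃ k : Fin i, S k : Set (GV i)) →
          GV.a j ∈ ({GV.s} ∪ ⋃ k : Fin i, S k : Set (GV i)) := fun j => b_mem_imp_a_mem hS
      exact ⟨connected_aux hsX htX hba, ⟨⟨GV.s, hsX⟩, convex_aux hsX htX hba⟩, hsX, htX⟩
  refine ⟨main, ?_⟩
  have hset : {X : Set (GV i) | ConnectedIn GAdj X ∧
      ConvexIn GAdj X ∧ GV.s ∈ X ∧ GV.t ∉ X} = Set.range (Fc (i := i)) := by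
    ext X
    rw [Set.mem_setOf_eq, main]
    constructor
    · rintro ⟨S, hS, rfl⟩
      classical
      refine ⟨fun j => if S j = ∅ then 0 else if S j = {GV.a j} then 1 else 2, ?_⟩
      have hpick : ∀ j : Fin i,
          pick j (if S j = ∅ then 0 else if S j = {GV.a j} then 1 else 2) = S j := by
        intro j
        rcases hS j with h | h | h
        · simp [h, pick]
        · simp [h, pick]
        · have hne2 : ({GV.a j, GV.b j} : Set (GV i)) ≠ {GV.a j} := by
            intro hh
            have : GV.b j ∈ ({GV.a j} : Set (GV i)) := hh ▸ (by right; rfl)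
            simp at this
          have hne1 : ({GV.a j, GV.b j} : Set (GV i)) ≠ ∅ := (Set.insert_nonempty _ _).ne_empty
          simp [h, hne1, hne2, pick]
      show Fc _ = _
      unfold Fc
      congr 1
      exact Set.iUnion_congr hpick
    · rintro ⟨c, rfl⟩
      exact ⟨fun j => pick j (c j), fun j => pick_cases j (c j), rfl⟩
  rw [hset, ← Nat.card_coe_set_eq, Nat.card_range_of_injective Fc_inj]
  simp [Nat.card_eq_fintype_card]
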